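/- arXiv:0805.1252 — 2 statements merged into one kernel-verified Lean document; each statement's English description precedes it below -/
import Mathlib

section
/- Let n ≥ 1 and let Φ_B = {±e_i : 1 ≤ i ≤ n} ∪ {±e_j ± e_k : 1 ≤ j < k ≤ n} (all four sign combinations) be the set of roots of type B_n in ℝ^n, with dual lattice M = ℤ^n. Let F = {u ∈ ℝ^n : −1 ≤ ⟨u, v⟩ ≤ 1 for all v ∈ Φ_B}. Then for every odd integer q ≥ 3 and every w ∈ (1/q)M, there exists u ∈ (1/q)M with u − w ∈ M and u lying in the topological interior of F. (Consequently, every lattice polytope cut out by B_n is diagonally split for every odd q.) -/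
open Finset

/-- The `i`-th standard basis vector of `ℝ^n`. -/
noncomputable def stdBasis (n : ℕ) (i : Fin n) : Fin n → ℝ := fun j => if j = i then 1 else 0

/-- The standard inner product on `ℝ^n`. -/
noncomputable def innerProd {n : ℕ} (u v : Fin n → ℝ) : ℝ := ∑ i, u i * v i

/-- The roots of type `B_n`: `±e_i` and `±e_j ± e_k` for `j < k` (all four sign choices). -/
def typeB (n : ℕ) : Set (Fin n → ℝ) :=
  {v | ∃ i, v = stdBasis n i ∨ v = -stdBasis n i} ∪
  {v | ∃ j k, j < k ∧ ∃ ε δ : ℝ, (ε = 1 ∨ ε = -1) ∧ (δ = 1 ∨ δ = -1) ∧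
    v = ε • stdBasis n j + δ • stdBasis n k}

/-- The lattice `ℤ^n ⊆ ℝ^n`. -/
def intLattice (n : ℕ) : Set (Fin n → ℝ) := {u | ∀ i, ∃ m : ℤ, u i = m}

/-- The diagonal splitting polytope `F = {u | -1 ≤ ⟨u,v⟩ ≤ 1 for all v ∈ Φ}`. -/
def splitPolytope (n : ℕ) (Φ : Set (Fin n → ℝ)) : Set (Fin n → ℝ) :=
  {u | ∀ v ∈ Φ, -1 ≤ innerProd u v ∧ innerProd u v ≤ 1}

lemma innerProd_std (n : ℕ) (x : Fin n → ℝ) (i : Fin n) :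
    innerProd x (stdBasis n i) = x i := by
  simp [innerProd, stdBasis, mul_ite, Finset.sum_ite_eq']

lemma innerProd_neg (n : ℕ) (x v : Fin n → ℝ) :
    innerProd x (-v) = - innerProd x v := by
  simp [innerProd]

lemma innerProd_comb (n : ℕ) (x : Fin n → ℝ) (ε δ : ℝ) (j k : Fin n) :
    innerProd x (ε • stdBasis n j + δ • stdBasis n k) = ε * x j + δ * x k := by
  simp only [innerProd, stdBasis, Pi.add_apply, Pi.smul_apply, smul_eq_mul,
    mul_add, mul_ite, mul_one, mul_zero, Finset.sum_add_distrib, Finset.sum_ite_eq',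
    Finset.mem_univ, if_true]
  ring

lemma smallBox_subset (n : ℕ) :
    {x : Fin n → ℝ | ∀ i, |x i| < 1/2} ⊆ splitPolytope n (typeB n) := by
  intro x hx v hv
  have key : |innerProd x v| ≤ 1 := by
    rcases hv with ⟨i, hi | hi⟩ | ⟨j, k, hjk, ε, δ, hε, hδ, hv⟩
    · rw [hi, innerProd_std]
      exact le_trans (hx i).le (by norm_num)
    · rw [hi, innerProd_neg, abs_neg, innerProd_std]
      exact le_trans (hx i).le (by norm_num)
    · rw [hv, innerProd_comb]
      have hε1 : |ε| = 1 := by rcases hε with h | h <;> simp [h]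
      have hδ1 : |δ| = 1 := by rcases hδ with h | h <;> simp [h]
      calc |ε * x j + δ * x k| ≤ |ε * x j| + |δ * x k| := abs_add_le _ _
        _ = |x j| + |x k| := by rw [abs_mul, abs_mul, hε1, hδ1, one_mul, one_mul]
        _ ≤ 1 := by linarith [hx j, hx k]
  exact abs_le.mp key

lemma smallBox_open (n : ℕ) : IsOpen {x : Fin n → ℝ | ∀ i, |x i| < 1/2} := by
  have : {x : Fin n → ℝ | ∀ i, |x i| < 1/2}
      = Set.pi Set.univ (fun _ : Fin n => {t : ℝ | |t| < 1/2}) := by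
    ext x; simp [Set.mem_pi]
  rw [this]
  exact isOpen_set_pi Set.finite_univ (fun i _ => isOpen_lt continuous_abs continuous_const)

/-- Every lattice polytope cut out by `B_n` is diagonally split for every odd `q ≥ 3`:
the interior of the diagonal splitting polytope of `B_n` contains a representative of
every equivalence class in `(1/q)ℤ^n / ℤ^n`. -/
theorem typeB_diagonally_split (n : ℕ) (hn : 1 ≤ n) (q : ℤ) (hq : 3 ≤ q) (hodd : Odd q)
    (w : Fin n → ℝ) (hw : (q : ℝ) • w ∈ intLattice n) :
    ∃ u : Fin n → ℝ, (q : ℝ) • u ∈ intLattice n ∧ u - w ∈ intLattice n ∧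
      u ∈ interior (splitPolytope n (typeB n)) := by
  choose m hm using hw
  simp only [Pi.smul_apply, smul_eq_mul] at hm
  refine ⟨fun i => w i - round (w i), ?_, ?_, ?_⟩
  · intro i
    refine ⟨m i - q * round (w i), ?_⟩
    simp only [Pi.smul_apply, smul_eq_mul]
    push_cast
    rw [← hm i]; ring
  · intro i
    refine ⟨-round (w i), ?_⟩
    simp [Pi.sub_apply]
  · have hu : ∀ i, |w i - round (w i)| < 1/2 := by
      intro i
      refine lt_of_le_of_ne (abs_sub_round (w i)) ?_
      intro heq
      obtain ⟨c, hc⟩ := hodd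
      rcases (abs_eq (by norm_num : (0:ℝ) ≤ 1/2)).mp heq with h | h
      · have h2 : (2*(m i) : ℝ) = 2*q*(round (w i)) + q := by
          have hmi := hm i
          rw [show w i = (round (w i) : ℝ) + 1/2 from by linarith] at hmi
          linarith
        have h3 : (2*(m i) : ℤ) = 2*q*(round (w i)) + q := by exact_mod_cast h2
        exact (Int.not_odd_iff_even.mpr ⟨m i - q * round (w i), by linarith⟩) ⟨c, hc⟩
      · have h2 : (2*(m i) : ℝ) = 2*q*(round (w i)) - q := by
          have hmi := hm i
          rw [show w i = (round (w i) : ℝ) - 1/2 from by linarith] at hmi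
          linarith
        have h3 : (2*(m i) : ℤ) = 2*q*(round (w i)) - q := by exact_mod_cast h2
        exact (Int.not_odd_iff_even.mpr ⟨q * round (w i) - m i, by linarith⟩) ⟨c, hc⟩
    exact interior_maximal (smallBox_subset n) (smallBox_open n) hu
end

section
/- Let n ≥ 2 and let Φ_D = {±e_j ± e_k : 1 ≤ j < k ≤ n} (all four sign combinations) be the set of roots of type D_n in ℝ^n, with dual lattice M = ℤ^n + ℤ·(1/2, …, 1/2). Let P ⊆ ℝ^n be a lattice polytope cut out by Φ_D: that is, P is the convex hull of a nonempty finite subset of M, and there exist a finite subset S ⊆ Φ_D and real numbers c_v (v ∈ S) with P = {x ∈ ℝ^n : ⟨x, v⟩ ≥ c_v for all v ∈ S}. Then P is normal: for every positive integer m, every point of M lying in the dilate m·P is a sum of m points of M ∩ P. -/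
open Finset Pointwise

/-- The roots of type `D_n`: `±e_j ± e_k` for `j < k` (all four sign choices). -/
def typeD (n : ℕ) : Set (Fin n → ℝ) :=
  {v | ∃ j k, j < k ∧ ∃ ε δ : ℝ, (ε = 1 ∨ ε = -1) ∧ (δ = 1 ∨ δ = -1) ∧
    v = ε • stdBasis n j + δ • stdBasis n k}

/-- The lattice `M = ℤ^n + ℤ·(1/2, …, 1/2) ⊆ ℝ^n`, the union of `ℤ^n` and its translate by
`(1/2, …, 1/2)`. -/
def halfLattice (n : ℕ) : Set (Fin n → ℝ) :=
  {u | (∀ i, ∃ m : ℤ, u i = m) ∨ (∀ i, ∃ m : ℤ, u i = m + 1/2)}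

/-! ### Auxiliary lemmas -/

/-- Rounding half away from zero. -/
noncomputable def rnd (t : ℝ) : ℤ := if 0 ≤ t then ⌊t + 1/2⌋ else -⌊-t + 1/2⌋

lemma rnd_neg (t : ℝ) : rnd (-t) = - rnd t := by
  unfold rnd
  rcases lt_trichotomy t 0 with h|h|h
  · rw [if_pos (by linarith), if_neg (by linarith)]; ring_nf
  · subst h; norm_num
  · rw [if_neg (by linarith), if_pos (by linarith)]; ring_nf

lemma rnd_bound (t : ℝ) : |(rnd t : ℝ) - t| ≤ 1/2 := by
  unfold rnd
  rcases le_or_gt 0 t with h|h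
  · rw [if_pos h]
    have h1 := Int.floor_le (t + 1/2)
    have h2 := Int.lt_floor_add_one (t + 1/2)
    rw [abs_le]; constructor <;> linarith
  · rw [if_neg (by linarith)]
    have h1 := Int.floor_le (-t + 1/2)
    have h2 := Int.lt_floor_add_one (-t + 1/2)
    rw [abs_le]; push_cast; constructor <;> linarith

lemma innerProd_root {n : ℕ} (z : Fin n → ℝ) {j k : Fin n} (h : j ≠ k) (ε δ : ℝ) :
    innerProd z (ε • stdBasis n j + δ • stdBasis n k) = ε * z j + δ * z k := by
  unfold innerProd stdBasis
  simp only [Pi.add_apply, Pi.smul_apply, smul_eq_mul]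
  have key : ∀ i : Fin n, z i * (ε * (if i = j then (1:ℝ) else 0) + δ * (if i = k then 1 else 0))
      = (if i = j then ε * z i else 0) + (if i = k then δ * z i else 0) := by
    intro i
    split_ifs with h1 h2
    · exact absurd (h1.symm.trans h2) h
    · ring
    · ring
    · ring
  rw [Finset.sum_congr rfl (fun i _ => key i), Finset.sum_add_distrib,
    Finset.sum_ite_eq' Finset.univ j (fun i => ε * z i),
    Finset.sum_ite_eq' Finset.univ k (fun i => δ * z i)]
  simp [mul_comm]

lemma innerProd_comb_s10 {n : ℕ} (a b : ℝ) (z z' v : Fin n → ℝ) :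
    innerProd (a • z + b • z') v = a * innerProd z v + b * innerProd z' v := by
  unfold innerProd
  rw [Finset.mul_sum, Finset.mul_sum, ← Finset.sum_add_distrib]
  congr 1; ext i; simp [mul_add, add_mul, mul_assoc]

lemma innerProd_smul {n : ℕ} (a : ℝ) (z v : Fin n → ℝ) :
    innerProd (a • z) v = a * innerProd z v := by
  unfold innerProd
  rw [Finset.mul_sum]; congr 1; ext i; simp [mul_assoc]

lemma innerProd_sub {n : ℕ} (z z' v : Fin n → ℝ) :
    innerProd (z - z') v = innerProd z v - innerProd z' v := by
  unfold innerProd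
  rw [← Finset.sum_sub_distrib]
  congr 1; ext i; simp [Pi.sub_apply]; ring

lemma innerProd_sum_right {n : ℕ} (z : Fin n → ℝ) (T : Finset (Fin n → ℝ)) :
    innerProd z (∑ v ∈ T, v) = ∑ v ∈ T, innerProd z v := by
  unfold innerProd
  rw [Finset.sum_comm]
  congr 1; ext i; simp [Finset.mul_sum]

lemma convex_inner_ge {n : ℕ} (w : Fin n → ℝ) (a : ℝ) :
    Convex ℝ {z : Fin n → ℝ | a ≤ innerProd z w} := by
  intro p hp q hq s t hs ht hst
  simp only [Set.mem_setOf_eq] at *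
  rw [innerProd_comb_s10]
  have h1 : s * a ≤ s * innerProd p w := mul_le_mul_of_nonneg_left hp hs
  have h2 : t * a ≤ t * innerProd q w := mul_le_mul_of_nonneg_left hq ht
  have h3 : (s + t) * a = 1 * a := by rw [hst]
  nlinarith

lemma hull_le {n : ℕ} (V : Set (Fin n → ℝ)) (w : Fin n → ℝ) (a : ℝ)
    (h : ∀ u ∈ V, a ≤ innerProd u w) : ∀ z ∈ convexHull ℝ V, a ≤ innerProd z w :=
  fun _ hz => convexHull_min h (convex_inner_ge w a) hz

lemma halfLattice_sub {n : ℕ} {x y : Fin n → ℝ} (hx : x ∈ halfLattice n)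
    (hy : y ∈ halfLattice n) : x - y ∈ halfLattice n := by
  rcases hx with hx|hx <;> rcases hy with hy|hy
  · left; intro i; obtain ⟨a, ha⟩ := hx i; obtain ⟨b, hb⟩ := hy i
    exact ⟨a - b, by rw [Pi.sub_apply, ha, hb]; push_cast; ring⟩
  · right; intro i; obtain ⟨a, ha⟩ := hx i; obtain ⟨b, hb⟩ := hy i
    exact ⟨a - b - 1, by rw [Pi.sub_apply, ha, hb]; push_cast; ring⟩
  · right; intro i; obtain ⟨a, ha⟩ := hx i; obtain ⟨b, hb⟩ := hy i
    exact ⟨a - b, by rw [Pi.sub_apply, ha, hb]; push_cast; ring⟩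
  · left; intro i; obtain ⟨a, ha⟩ := hx i; obtain ⟨b, hb⟩ := hy i
    exact ⟨a - b, by rw [Pi.sub_apply, ha, hb]; push_cast; ring⟩

lemma halfLattice_add_int {n : ℕ} {u : Fin n → ℝ} (hu : u ∈ halfLattice n) (w : Fin n → ℤ) :
    (fun i => u i + (w i : ℝ)) ∈ halfLattice n := by
  rcases hu with hu|hu
  · left; intro i; obtain ⟨a, ha⟩ := hu i
    exact ⟨a + w i, by simp only []; rw [ha]; push_cast; ring⟩
  · right; intro i; obtain ⟨a, ha⟩ := hu i
    exact ⟨a + w i, by simp only []; rw [ha]; push_cast; ring⟩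

lemma pm_int {n : ℕ} {u : Fin n → ℝ} (hu : u ∈ halfLattice n) {ε δ : ℝ}
    (hε : ε = 1 ∨ ε = -1) (hδ : δ = 1 ∨ δ = -1) (j k : Fin n) :
    ∃ z : ℤ, ε * u j + δ * u k = z := by
  rcases hu with hu|hu <;>
    [obtain ⟨a, ha⟩ := hu j; obtain ⟨a, ha⟩ := hu j] <;>
    [obtain ⟨b, hb⟩ := hu k; obtain ⟨b, hb⟩ := hu k] <;>
    rcases hε with rfl|rfl <;> rcases hδ with rfl|rfl
  · exact ⟨a + b, by rw [ha, hb]; push_cast; ring⟩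
  · exact ⟨a - b, by rw [ha, hb]; push_cast; ring⟩
  · exact ⟨b - a, by rw [ha, hb]; push_cast; ring⟩
  · exact ⟨-a - b, by rw [ha, hb]; push_cast; ring⟩
  · exact ⟨a + b + 1, by rw [ha, hb]; push_cast; ring⟩
  · exact ⟨a - b, by rw [ha, hb]; push_cast; ring⟩
  · exact ⟨b - a, by rw [ha, hb]; push_cast; ring⟩
  · exact ⟨-a - b - 1, by rw [ha, hb]; push_cast; ring⟩

/-- Key inductive lemma: decomposition of lattice points of dilates. -/
lemma typeD_key {n : ℕ} (S : Finset (Fin n → ℝ)) (hS : ↑S ⊆ typeD n)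
    (V : Set (Fin n → ℝ)) (hVfin : V.Finite) (hVne : V.Nonempty) (hVM : V ⊆ halfLattice n)
    (d : (Fin n → ℝ) → ℝ) (hdint : ∀ v ∈ S, ∃ z : ℤ, d v = z)
    (hPeq : convexHull ℝ V = {z | ∀ v ∈ S, d v ≤ innerProd z v}) :
    ∀ m : ℕ, ∀ x : Fin n → ℝ, x ∈ halfLattice n →
      (∀ v ∈ S, ((m : ℝ) + 1) * d v ≤ innerProd x v) →
      ∃ f : Fin (m + 1) → (Fin n → ℝ),
        (∀ j, f j ∈ halfLattice n ∧ f j ∈ convexHull ℝ V) ∧ x = ∑ j, f j := by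
  intro m
  induction m with
  | zero =>
    intro x hx hxc
    refine ⟨fun _ => x, fun _ => ⟨hx, ?_⟩, by simp⟩
    rw [hPeq]
    intro v hv
    have := hxc v hv
    norm_num at this
    exact this
  | succ m IH =>
    intro x hx hxc
    classical
    have hm2 : (0:ℝ) < (m:ℝ) + 2 := by positivity
    have hxc' : ∀ v ∈ S, ((m:ℝ) + 2) * d v ≤ innerProd x v := by
      intro v hv
      have := hxc v hv
      push_cast at this
      linarith
    set T : Finset (Fin n → ℝ) :=
      S.filter (fun v => innerProd x v = ((m:ℝ) + 2) * d v) with hT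
    have hpmem : (((m:ℝ) + 2)⁻¹ • x) ∈ convexHull ℝ V := by
      rw [hPeq]
      intro v hv
      rw [innerProd_smul]
      have h1 := hxc' v hv
      rw [show ((m:ℝ)+2)⁻¹ * innerProd x v = innerProd x v / ((m:ℝ)+2) by ring,
        le_div_iff₀ hm2]
      linarith
    obtain ⟨u, huVF, humin⟩ := Finset.exists_min_image hVfin.toFinset
      (fun z => innerProd z (∑ v ∈ T, v)) ((Set.Finite.toFinset_nonempty hVfin).mpr hVne)
    have huV : u ∈ V := (Set.Finite.mem_toFinset hVfin).mp huVF
    have huhull : u ∈ convexHull ℝ V := subset_convexHull ℝ V huV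
    have hudv : ∀ v ∈ S, d v ≤ innerProd u v := by rw [hPeq] at huhull; exact huhull
    have hmin_hull : ∀ z ∈ convexHull ℝ V,
        innerProd u (∑ v ∈ T, v) ≤ innerProd z (∑ v ∈ T, v) :=
      hull_le V _ _ (fun z hz => humin z ((Set.Finite.mem_toFinset hVfin).mpr hz))
    have hptight : ∀ v ∈ T, innerProd (((m:ℝ)+2)⁻¹ • x) v = d v := by
      intro v hv
      rw [Finset.mem_filter] at hv
      rw [innerProd_smul, hv.2]
      field_simp
    have huT : ∀ v ∈ T, innerProd u v = d v := by
      have h1 : ∑ v ∈ T, innerProd u v ≤ ∑ v ∈ T, d v := by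
        have h0 := hmin_hull _ hpmem
        rw [innerProd_sum_right, innerProd_sum_right] at h0
        calc ∑ v ∈ T, innerProd u v ≤ ∑ v ∈ T, innerProd (((m:ℝ)+2)⁻¹ • x) v := h0
          _ = ∑ v ∈ T, d v := Finset.sum_congr rfl hptight
      have h2 : ∀ v ∈ T, d v ≤ innerProd u v :=
        fun v hv => hudv v (Finset.mem_filter.mp hv).1
      intro v hv
      by_contra hne
      have hlt : d v < innerProd u v := lt_of_le_of_ne (h2 v hv) (fun h => hne h.symm)
      have h3 : ∑ v ∈ T, d v < ∑ v ∈ T, innerProd u v := Finset.sum_lt_sum h2 ⟨v, hv, hlt⟩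
      linarith
    -- the rounded point
    obtain ⟨y, hy⟩ : ∃ y : Fin n → ℝ,
        y = fun i => u i + ((rnd (x i / ((m:ℝ)+2) - u i) : ℤ) : ℝ) := ⟨_, rfl⟩
    have hyH : y ∈ halfLattice n := by
      rw [hy]; exact halfLattice_add_int (hVM huV) _
    have hbounds : ∀ v ∈ S,
        d v ≤ innerProd y v ∧ innerProd y v ≤ innerProd x v - ((m:ℝ)+1) * d v := by
      intro v hv
      obtain ⟨j, k, hjk, ε, δ, hε, hδ, hveq⟩ := hS hv
      have hform : ∀ z : Fin n → ℝ, innerProd z v = ε * z j + δ * z k := fun z => by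
        rw [hveq]; exact innerProd_root z (ne_of_lt hjk) ε δ
      obtain ⟨rj, hrj⟩ : ∃ r : ℝ, r = x j / ((m:ℝ)+2) - u j := ⟨_, rfl⟩
      obtain ⟨rk, hrk⟩ : ∃ r : ℝ, r = x k / ((m:ℝ)+2) - u k := ⟨_, rfl⟩
      have hyj : y j = u j + (rnd rj : ℝ) := by rw [hy, hrj]
      have hyk : y k = u k + (rnd rk : ℝ) := by rw [hy, hrk]
      have hYv : innerProd y v
          = innerProd u v + (ε * (rnd rj : ℝ) + δ * (rnd rk : ℝ)) := by
        rw [hform y, hform u, hyj, hyk]; ring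
      obtain ⟨zD, hzD⟩ := hdint v hv
      obtain ⟨zX, hzX⟩ := pm_int hx hε hδ j k
      obtain ⟨zU, hzU⟩ := pm_int (hVM huV) hε hδ j k
      have hXz : innerProd x v = (zX:ℝ) := by rw [hform]; exact hzX
      have hUz : innerProd u v = (zU:ℝ) := by rw [hform]; exact hzU
      have hWz : ∃ zW : ℤ, ε * (rnd rj : ℝ) + δ * (rnd rk : ℝ) = (zW:ℝ) := by
        rcases hε with rfl|rfl <;> rcases hδ with rfl|rfl
        exacts [⟨rnd rj + rnd rk, by push_cast; ring⟩, ⟨rnd rj - rnd rk, by push_cast; ring⟩,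
          ⟨rnd rk - rnd rj, by push_cast; ring⟩, ⟨-rnd rj - rnd rk, by push_cast; ring⟩]
      obtain ⟨zW, hzW⟩ := hWz
      have hbj := rnd_bound rj
      have hbk := rnd_bound rk
      rw [abs_le] at hbj hbk
      have hWR : - 1 ≤ (ε * (rnd rj : ℝ) + δ * (rnd rk : ℝ)) - (ε * rj + δ * rk)
          ∧ (ε * (rnd rj : ℝ) + δ * (rnd rk : ℝ)) - (ε * rj + δ * rk) ≤ 1 := by
        rcases hε with rfl|rfl <;> rcases hδ with rfl|rfl <;>
          constructor <;> linarith [hbj.1, hbj.2, hbk.1, hbk.2]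
      have hR : ε * rj + δ * rk = innerProd x v / ((m:ℝ)+2) - innerProd u v := by
        rw [hform x, hform u, hrj, hrk]
        field_simp
        ring
      by_cases htight : innerProd x v = ((m:ℝ)+2) * d v
      · have hvT : v ∈ T := Finset.mem_filter.mpr ⟨hv, htight⟩
        have hU : innerProd u v = d v := huT v hvT
        have hR0 : ε * rj + δ * rk = 0 := by
          rw [hR, htight, hU]
          field_simp
          ring
        have hW0 : ε * (rnd rj : ℝ) + δ * (rnd rk : ℝ) = 0 := by
          rcases hε with rfl|rfl <;> rcases hδ with rfl|rfl
          · have h' : rj = -rk := by linarith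
            rw [h', rnd_neg]; push_cast; ring
          · have h' : rj = rk := by linarith
            rw [h']; ring
          · have h' : rj = rk := by linarith
            rw [h']; ring
          · have h' : rj = -rk := by linarith
            rw [h', rnd_neg]; push_cast; ring
        constructor
        · rw [hYv, hW0, hU]; linarith
        · rw [hYv, hW0, hU, htight]; linarith
      · have hxc'' : ((m:ℝ)+2) * d v ≤ innerProd x v := hxc' v hv
        have hpos : (0:ℝ) < innerProd x v - ((m:ℝ)+2) * d v :=
          sub_pos.mpr (lt_of_le_of_ne hxc'' (fun h => htight h.symm))
        have hcast : innerProd x v - ((m:ℝ)+2) * d v = ((zX - ((m:ℤ)+2) * zD : ℤ) : ℝ) := by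
          rw [hXz, hzD]; push_cast; ring
        have hgap : (1:ℝ) ≤ innerProd x v - ((m:ℝ)+2) * d v := by
          rw [hcast] at hpos ⊢
          have hZ : (0:ℤ) < zX - ((m:ℤ)+2) * zD := by exact_mod_cast hpos
          have hZ1 : (1:ℤ) ≤ zX - ((m:ℤ)+2) * zD := hZ
          exact_mod_cast hZ1
        have hlow : d v - 1 < innerProd y v := by
          rw [hYv]
          have h5 : ε * rj + δ * rk - 1 ≤ ε * (rnd rj:ℝ) + δ * (rnd rk:ℝ) := by
            linarith [hWR.1]
          rw [hR] at h5
          have hdivlow : d v < innerProd x v / ((m:ℝ)+2) := by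
            rw [lt_div_iff₀ hm2]
            linarith
          linarith
        have goal1 : d v ≤ innerProd y v := by
          have hYz : innerProd y v = ((zU + zW : ℤ):ℝ) := by
            rw [hYv, hUz, hzW]; push_cast; ring
          rw [hYz, hzD] at hlow
          rw [hYz, hzD]
          have hZ : (zD:ℤ) - 1 < zU + zW := by exact_mod_cast (by push_cast at hlow ⊢; linarith : ((zD:ℝ) - 1 < ((zU + zW : ℤ) : ℝ)))
          have : (zD:ℤ) ≤ zU + zW := by omega
          exact_mod_cast this
        have goal2 : innerProd y v ≤ innerProd x v - ((m:ℝ)+1) * d v := by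
          have h6 : ε*(rnd rj:ℝ)+δ*(rnd rk:ℝ) ≤ ε*rj+δ*rk + 1 := by linarith [hWR.2]
          rw [hR] at h6
          have h7 : innerProd x v / ((m:ℝ)+2) < innerProd x v - ((m:ℝ)+1) * d v := by
            rw [div_lt_iff₀ hm2]
            have hA : ((m:ℝ)+1) * 1 ≤ ((m:ℝ)+1) * (innerProd x v - ((m:ℝ)+2) * d v) :=
              mul_le_mul_of_nonneg_left hgap (by positivity)
            have hA' : ((m:ℝ)+1) * (innerProd x v - ((m:ℝ)+2) * d v)
                = (innerProd x v - ((m:ℝ)+1) * d v) * ((m:ℝ)+2) - innerProd x v := by ring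
            linarith [hA, hA']
          have hup : innerProd y v < innerProd x v - ((m:ℝ)+1) * d v + 1 := by
            rw [hYv]
            linarith
          have hYz : innerProd y v = ((zU + zW : ℤ):ℝ) := by
            rw [hYv, hUz, hzW]; push_cast; ring
          have hBz : innerProd x v - ((m:ℝ)+1) * d v = ((zX - ((m:ℤ)+1) * zD : ℤ) : ℝ) := by
            rw [hXz, hzD]; push_cast; ring
          rw [hYz, hBz] at hup ⊢
          have hZ : (zU + zW : ℤ) < zX - ((m:ℤ)+1) * zD + 1 := by
            exact_mod_cast (by push_cast at hup ⊢; linarith :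
              (((zU + zW : ℤ)):ℝ) < ((zX - ((m:ℤ)+1) * zD : ℤ) : ℝ) + 1)
          have : (zU + zW : ℤ) ≤ zX - ((m:ℤ)+1) * zD := by omega
          exact_mod_cast this
        exact ⟨goal1, goal2⟩
    have hyP : y ∈ convexHull ℝ V := by
      rw [hPeq]; exact fun v hv => (hbounds v hv).1
    have hxyH : x - y ∈ halfLattice n := halfLattice_sub hx hyH
    have hxyc : ∀ v ∈ S, ((m:ℝ)+1) * d v ≤ innerProd (x - y) v := by
      intro v hv
      rw [innerProd_sub]
      linarith [(hbounds v hv).2]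
    obtain ⟨f', hf', hsum'⟩ := IH (x - y) hxyH hxyc
    refine ⟨Fin.cons y f', ?_, ?_⟩
    · intro j
      refine Fin.cases ?_ ?_ j
      · exact ⟨hyH, hyP⟩
      · intro i; exact hf' i
    · rw [Fin.sum_cons, ← hsum']
      abel

/-- Every lattice polytope (with respect to the dual lattice `M = ℤ^n + ℤ·(1/2,…,1/2)` of
the root lattice) cut out by the root system `D_n` is normal: every lattice point of `m·P`
is a sum of `m` lattice points of `P`. -/
theorem typeD_polytope_normal (n : ℕ) (hn : 2 ≤ n) (P : Set (Fin n → ℝ))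
    (hpoly : ∃ V : Set (Fin n → ℝ), V.Finite ∧ V.Nonempty ∧ V ⊆ halfLattice n ∧
      P = convexHull ℝ V)
    (hcut : ∃ S : Finset (Fin n → ℝ), ↑S ⊆ typeD n ∧ ∃ c : (Fin n → ℝ) → ℝ,
      P = {x | ∀ v ∈ S, c v ≤ innerProd x v})
    (m : ℕ) (hm : 0 < m) (x : Fin n → ℝ) (hx : x ∈ halfLattice n) (hxm : x ∈ (m : ℝ) • P) :
    ∃ f : Fin m → (Fin n → ℝ), (∀ j, f j ∈ halfLattice n ∧ f j ∈ P) ∧ x = ∑ j, f j := by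
  obtain ⟨V, hVfin, hVne, hVM, hPV⟩ := hpoly
  obtain ⟨S, hS, c, hPc⟩ := hcut
  have hVFne : hVfin.toFinset.Nonempty := (Set.Finite.toFinset_nonempty hVfin).mpr hVne
  set d : (Fin n → ℝ) → ℝ := fun v => hVfin.toFinset.inf' hVFne (fun u => innerProd u v)
    with hd
  have hdle : ∀ v, ∀ u ∈ V, d v ≤ innerProd u v := by
    intro v u hu
    exact Finset.inf'_le _ ((Set.Finite.mem_toFinset hVfin).mpr hu)
  have hdach : ∀ v, ∃ u ∈ V, d v = innerProd u v := by
    intro v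
    obtain ⟨u, hu, heq⟩ := Finset.exists_mem_eq_inf' hVFne (fun u => innerProd u v)
    exact ⟨u, (Set.Finite.mem_toFinset hVfin).mp hu, heq⟩
  have hVP : V ⊆ P := by
    rw [hPV]; exact subset_convexHull ℝ V
  have hdint : ∀ v ∈ S, ∃ z : ℤ, d v = z := by
    intro v hv
    obtain ⟨u, huV, heq⟩ := hdach v
    obtain ⟨j, k, hjk, ε, δ, hε, hδ, hveq⟩ := hS hv
    obtain ⟨z, hz⟩ := pm_int (hVM huV) hε hδ j k
    exact ⟨z, by rw [heq, hveq, innerProd_root u (ne_of_lt hjk)]; exact hz⟩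
  have hcd : ∀ v ∈ S, c v ≤ d v := by
    intro v hv
    obtain ⟨u, huV, heq⟩ := hdach v
    have : u ∈ P := hVP huV
    rw [hPc] at this
    rw [heq]
    exact this v hv
  have hPeq : convexHull ℝ V = {z | ∀ v ∈ S, d v ≤ innerProd z v} := by
    apply Set.Subset.antisymm
    · intro z hz v hv
      exact hull_le V v (d v) (fun u hu => hdle v u hu) z hz
    · intro z hz
      have : z ∈ P := by
        rw [hPc]
        intro v hv
        exact le_trans (hcd v hv) (hz v hv)
      rw [hPV] at this
      exact this
  obtain ⟨m', rfl⟩ : ∃ m', m = m' + 1 := ⟨m - 1, (Nat.succ_pred_eq_of_pos hm).symm⟩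
  have hxc : ∀ v ∈ S, ((m' : ℝ) + 1) * d v ≤ innerProd x v := by
    intro v hv
    obtain ⟨z, hzP, hzx⟩ := hxm
    have hz' : z ∈ convexHull ℝ V := by rw [← hPV]; exact hzP
    rw [hPeq] at hz'
    have h1 : d v ≤ innerProd z v := hz' v hv
    have h2 : innerProd x v = ((m' : ℝ) + 1) * innerProd z v := by
      rw [← hzx, innerProd_smul]; push_cast; ring
    rw [h2]
    have : (0:ℝ) ≤ (m':ℝ) + 1 := by positivity
    nlinarith
  obtain ⟨f, hf, hsum⟩ := typeD_key S hS V hVfin hVne hVM d hdint hPeq m' x hx hxc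
  exact ⟨f, fun j => ⟨(hf j).1, by rw [hPV]; exact (hf j).2⟩, hsum⟩
end
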